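/- Any two linearizations of a finite poset are related by the equivalence relation generated by swapping two consecutive independent events: if x, x' : Fin n → E are linearizations of a finite poset E, then x' can be obtained from x by a finite sequence of transpositions of adjacent positions i, i+1, where at each step the two swapped elements are incomparable in E. -/

import Mathlib

def IsLinearization {E : Type*} [PartialOrder E] {n : ℕ} (x : Fin n → E) : Prop :=
  Function.Bijective x ∧ ∀ i j : Fin n, i < j → ¬ (x j ≤ x i)

def AdjSwapRel {E : Type*} [PartialOrder E] {n : ℕ} (x y : Fin n → E) : Prop :=
  IsLinearization x ∧ IsLinearization y ∧
    ∃ (i : ℕ) (h1 : i < n) (h2 : i + 1 < n),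
      ¬ (x ⟨i, h1⟩ ≤ x ⟨i+1, h2⟩) ∧ ¬ (x ⟨i+1, h2⟩ ≤ x ⟨i, h1⟩) ∧
      y = x ∘ Equiv.swap ⟨i, h1⟩ ⟨i+1, h2⟩

/-- Number of inversions of a map `Fin n → Fin n`. -/
def invCount {n : ℕ} (g : Fin n → Fin n) : ℕ :=
  (Finset.univ.filter (fun p : Fin n × Fin n => p.1 < p.2 ∧ g p.2 < g p.1)).card

lemma strictMono_of_invCount_zero {n : ℕ} {g : Fin n → Fin n}
    (hinj : Function.Injective g) (h : invCount g = 0) : StrictMono g := by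
  intro a b hab
  have hne : g a ≠ g b := fun he => absurd (hinj he) (Fin.ne_of_lt hab)
  rcases lt_or_ge (g a) (g b) with h1 | h1
  · exact h1
  · exfalso
    have hmem : (a, b) ∈ Finset.univ.filter
        (fun p : Fin n × Fin n => p.1 < p.2 ∧ g p.2 < g p.1) := by
      simp only [Finset.mem_filter, Finset.mem_univ, true_and]
      exact ⟨hab, lt_of_le_of_ne h1 hne.symm⟩
    unfold invCount at h
    rw [Finset.card_eq_zero] at h
    simp [h] at hmem

/-- τ preserves order except on the pair (i, i+1). -/
lemma swap_lt {n i : ℕ} (h1 : i < n) (h2 : i + 1 < n) {a b : Fin n}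
    (hab : a < b) (hne : (a, b) ≠ (⟨i, h1⟩, ⟨i+1, h2⟩)) :
    Equiv.swap (⟨i, h1⟩ : Fin n) ⟨i+1, h2⟩ a < Equiv.swap (⟨i, h1⟩ : Fin n) ⟨i+1, h2⟩ b := by
  rcases eq_or_ne a ⟨i, h1⟩ with ha | ha
  · subst ha
    have hb : b ≠ ⟨i+1, h2⟩ := fun hb => hne (by rw [hb])
    have hb2 : (⟨i+1, h2⟩ : Fin n) < b :=
      lt_of_le_of_ne (by simpa [Fin.lt_def, Fin.le_def, Nat.succ_le_iff] using hab) (Ne.symm hb)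
    rw [Equiv.swap_apply_left, Equiv.swap_apply_of_ne_of_ne (Fin.ne_of_gt hab) hb]
    exact hb2
  rcases eq_or_ne a ⟨i+1, h2⟩ with ha2 | ha2
  · subst ha2
    have hb : b ≠ ⟨i, h1⟩ := Fin.ne_of_gt (lt_trans (by simp [Fin.lt_def]) hab)
    have hb2 : b ≠ ⟨i+1, h2⟩ := Fin.ne_of_gt hab
    rw [Equiv.swap_apply_right, Equiv.swap_apply_of_ne_of_ne hb hb2]
    exact lt_trans (by simp [Fin.lt_def]) hab
  rcases eq_or_ne b ⟨i, h1⟩ with hb | hb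
  · subst hb
    rw [Equiv.swap_apply_of_ne_of_ne ha ha2, Equiv.swap_apply_left]
    exact lt_trans hab (by simp [Fin.lt_def])
  rcases eq_or_ne b ⟨i+1, h2⟩ with hb2 | hb2
  · subst hb2
    rw [Equiv.swap_apply_of_ne_of_ne ha ha2, Equiv.swap_apply_right]
    exact lt_of_le_of_ne (by simpa [Fin.lt_def, Fin.le_def, Nat.lt_succ_iff] using hab) ha
  · rw [Equiv.swap_apply_of_ne_of_ne ha ha2, Equiv.swap_apply_of_ne_of_ne hb hb2]
    exact hab

lemma invCount_swap_lt {n i : ℕ} (h1 : i < n) (h2 : i + 1 < n) {g : Fin n → Fin n}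
    (hdesc : g ⟨i+1, h2⟩ < g ⟨i, h1⟩) :
    invCount (g ∘ Equiv.swap ⟨i, h1⟩ ⟨i+1, h2⟩) < invCount g := by
  classical
  set τ := Equiv.swap (⟨i, h1⟩ : Fin n) ⟨i+1, h2⟩ with hτ
  set S := Finset.univ.filter (fun p : Fin n × Fin n => p.1 < p.2 ∧ g p.2 < g p.1) with hS
  set S' := Finset.univ.filter
      (fun p : Fin n × Fin n => p.1 < p.2 ∧ (g ∘ τ) p.2 < (g ∘ τ) p.1) with hS'
  have key : invCount (g ∘ τ) ≤ (S \ {(⟨i, h1⟩, ⟨i+1, h2⟩)}).card := by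
    apply Finset.card_le_card_of_injOn (fun p => (τ p.1, τ p.2))
    · intro p hp
      simp only [hS', Finset.mem_coe, Finset.mem_filter, Finset.mem_univ, true_and, Function.comp] at hp
      have hne : p ≠ (⟨i, h1⟩, ⟨i+1, h2⟩) := by
        rintro rfl
        simp only [hτ, Equiv.swap_apply_left, Equiv.swap_apply_right] at hp
        exact absurd hp.2 (not_lt.mpr (le_of_lt hdesc))
      have hne' : (p.1, p.2) ≠ ((⟨i, h1⟩ : Fin n), (⟨i+1, h2⟩ : Fin n)) := by
        simpa using hne
      simp only [Finset.mem_coe, Finset.mem_sdiff, Finset.mem_singleton, hS, Finset.mem_filter,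
        Finset.mem_univ, true_and]
      refine ⟨⟨swap_lt h1 h2 hp.1 hne', hp.2⟩, ?_⟩
      intro hcon
      have h1' : τ p.1 = ⟨i, h1⟩ := congrArg Prod.fst hcon
      have h2' : τ p.2 = ⟨i+1, h2⟩ := congrArg Prod.snd hcon
      have : p.1 = ⟨i+1, h2⟩ := by
        have := congrArg τ h1'; simpa [hτ, Equiv.swap_apply_self, Equiv.swap_apply_left] using this
      have : p.2 = ⟨i, h1⟩ := by
        have := congrArg τ h2'; simpa [hτ, Equiv.swap_apply_self, Equiv.swap_apply_right] using this
      have hp1 := hp.1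
      rw [‹p.1 = _›, ‹p.2 = _›] at hp1
      exact absurd hp1 (by simp [Fin.lt_def])
    · intro p _ q _ hpq
      have h1' : τ p.1 = τ q.1 := congrArg Prod.fst hpq
      have h2' : τ p.2 = τ q.2 := congrArg Prod.snd hpq
      exact Prod.ext (τ.injective h1') (τ.injective h2')
  have hmem : (⟨i, h1⟩, (⟨i+1, h2⟩ : Fin n)) ∈ S := by
    simp only [hS, Finset.mem_filter, Finset.mem_univ, true_and]
    exact ⟨by simp [Fin.lt_def], hdesc⟩
  calc invCount (g ∘ τ) ≤ (S \ {(⟨i, h1⟩, ⟨i+1, h2⟩)}).card := key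
    _ < S.card := Finset.card_lt_card (Finset.sdiff_ssubset (by simpa using hmem) (by simp))

lemma strictMono_of_adj {n : ℕ} {g : Fin n → Fin n}
    (h : ∀ (i : ℕ) (h1 : i < n) (h2 : i + 1 < n), g ⟨i, h1⟩ < g ⟨i+1, h2⟩) :
    StrictMono g := by
  have key : ∀ (k : ℕ) (a : Fin n) (hb : (a : ℕ) + k + 1 < n), g a < g ⟨(a : ℕ) + k + 1, hb⟩ := by
    intro k
    induction k with
    | zero =>
      intro a hb
      have := h a a.2 hb
      simpa using this
    | succ k ihk =>
      intro a hb
      have h1 := ihk a (by omega)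
      have h2 := h ((a : ℕ) + k + 1) (by omega) (by omega)
      exact lt_trans h1 (lt_of_lt_of_eq h2 (congrArg g (Fin.ext (by show (a:ℕ)+k+1+1 = a+(k+1)+1; omega))))
  intro a b hab
  obtain ⟨k, hk⟩ : ∃ k, (b : ℕ) = (a : ℕ) + k + 1 := ⟨(b : ℕ) - a - 1, by omega⟩
  have hb : b = ⟨(a : ℕ) + k + 1, hk ▸ b.2⟩ := by simp [Fin.ext_iff, hk]
  rw [hb]
  exact key k a _

theorem linearizations_connected_by_adjacent_swaps
    (E : Type*) [PartialOrder E] [Fintype E] {n : ℕ} (x x' : Fin n → E)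
    (hx : IsLinearization x) (hx' : IsLinearization x') :
    Relation.EqvGen AdjSwapRel x x' := by
  classical
  set e' : Fin n ≃ E := Equiv.ofBijective x' hx'.1 with he'
  -- main claim by strong induction on inversion count
  suffices H : ∀ N (y : Fin n → E), IsLinearization y →
      invCount (fun a => e'.symm (y a)) ≤ N → Relation.EqvGen AdjSwapRel y x' by
    exact H _ x hx le_rfl
  intro N
  induction N with
  | zero =>
    intro y hy hcount
    have h0 : invCount (fun a => e'.symm (y a)) = 0 := Nat.le_zero.mp hcount
    have hinj : Function.Injective (fun a => e'.symm (y a)) :=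
      e'.symm.injective.comp hy.1.1
    have hmono := strictMono_of_invCount_zero hinj h0
    have hid : (fun a => e'.symm (y a)) = id := by
      have hidm : StrictMono (id : Fin n → Fin n) := fun _ _ h => h
      haveI : WellFoundedLT (Fin n) := inferInstance
      refine (StrictMono.range_inj hmono hidm).1 ?_
      have : Function.Surjective (fun a => e'.symm (y a)) :=
        e'.symm.surjective.comp hy.1.2
      simp [Set.range_eq_univ.mpr this, Set.range_id]
    have : y = x' := by
      funext a
      have := congrFun hid a
      simp only [id_eq] at this
      have := congrArg e' this
      simpa [he'] using this
    rw [this]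
    exact Relation.EqvGen.refl x'
  | succ N ih =>
    intro y hy hcount
    set g : Fin n → Fin n := fun a => e'.symm (y a) with hg
    by_cases hz : invCount g = 0
    · exact ih y hy (by rw [← hg]; omega)
    -- find an adjacent descent
    have hinj : Function.Injective g := e'.symm.injective.comp hy.1.1
    have hdesc : ∃ (i : ℕ) (h1 : i < n) (h2 : i + 1 < n), g ⟨i+1, h2⟩ < g ⟨i, h1⟩ := by
      by_contra hcon
      push_neg at hcon
      apply hz
      apply Finset.card_eq_zero.mpr
      rw [Finset.filter_eq_empty_iff]
      rintro ⟨a, b⟩ -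
      simp only [not_and, not_lt]
      intro hab
      -- g is strict mono by adjacent increments
      have hmono : StrictMono g := by
        apply strictMono_of_adj
        intro j hj1 hj2
        have hle := hcon j hj1 hj2
        have hne : g ⟨j + 1, hj2⟩ ≠ g ⟨j, hj1⟩ := by
          intro he
          have := hinj he
          simp [Fin.ext_iff] at this
        exact lt_of_le_of_ne hle (Ne.symm hne)
      exact le_of_lt (hmono hab)
    obtain ⟨i, h1, h2, hd⟩ := hdesc
    -- incomparability
    have hinc1 : ¬ (y ⟨i+1, h2⟩ ≤ y ⟨i, h1⟩) := hy.2 _ _ (by simp [Fin.lt_def])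
    have hye : ∀ a, y a = x' (g a) := fun a => (Equiv.apply_symm_apply e' (y a)).symm
    have hinc2 : ¬ (y ⟨i, h1⟩ ≤ y ⟨i+1, h2⟩) := by
      rw [hye ⟨i, h1⟩, hye ⟨i+1, h2⟩]
      exact hx'.2 _ _ hd
    set z : Fin n → E := y ∘ Equiv.swap ⟨i, h1⟩ ⟨i+1, h2⟩ with hzdef
    have hzlin : IsLinearization z := by
      constructor
      · exact hy.1.comp (Equiv.swap _ _).bijective
      · intro a b hab
        by_cases hab2 : (a, b) = ((⟨i, h1⟩ : Fin n), (⟨i+1, h2⟩ : Fin n))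
        · have ha : a = ⟨i, h1⟩ := congrArg Prod.fst hab2
          have hb : b = ⟨i+1, h2⟩ := congrArg Prod.snd hab2
          subst ha; subst hb
          simpa [hzdef, Equiv.swap_apply_left, Equiv.swap_apply_right] using hinc2
        · exact hy.2 _ _ (swap_lt h1 h2 hab hab2)
    have hrel : AdjSwapRel y z := ⟨hy, hzlin, i, h1, h2, hinc2, hinc1, rfl⟩
    have hgz : (fun a => e'.symm (z a)) = g ∘ Equiv.swap ⟨i, h1⟩ ⟨i+1, h2⟩ := rfl
    have hlt : invCount (fun a => e'.symm (z a)) < invCount g := by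
      rw [hgz]; exact invCount_swap_lt h1 h2 hd
    exact Relation.EqvGen.trans _ _ _ (Relation.EqvGen.rel _ _ hrel)
      (ih z hzlin (by omega))
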